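/- Let K be a field of characteristic zero and let α_1,…,α_m ∈ K be pairwise distinct and nonzero. For l ≥ 1 and μ ∈ {0,1,…,m}, let B_{l,μ,0}(t),…,B_{l,μ,m}(t) be the Padé polynomials for Euler's series at α_1,…,α_m. Then the (m+1)×(m+1) determinant Δ(t) = det( B_{l,μ,j}(t) )_{0≤μ≤m, 0≤j≤m} is a nonzero polynomial; more precisely Δ(t) = b·t^{m(m+1)l + m(m−1)/2} for some nonzero constant b ∈ K. -/

import Mathlib

open Polynomial Finset Nat

lemma deriv_step {K : Type*} [Field K] (a : K) (k : ℕ) (q : K[X]) :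
    derivative ((X - C a) ^ (k+1) * q)
      = (X - C a) ^ k * ((C ((k:K)+1)) * q + (X - C a) * derivative q) := by
  rw [derivative_mul, derivative_pow]
  ring_nf
  simp [derivative_X, derivative_C]
  ring

lemma eval_iter_lt {K : Type*} [Field K] (a : K) :
    ∀ (r : ℕ) (l : ℕ) (q : K[X]), r < l →
      eval a (derivative^[r] ((X - C a) ^ l * q)) = 0 := by
  intro r
  induction r with
  | zero => intro l q hl; cases l with
    | zero => omega
    | succ l => simp [eval_pow]
  | succ r ih =>
    intro l q hl
    cases l with
    | zero => omega
    | succ l =>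
      rw [Function.iterate_succ_apply, deriv_step]
      exact ih l _ (by omega)

lemma eval_iter_eq {K : Type*} [Field K] (a : K) :
    ∀ (l : ℕ) (q : K[X]),
      eval a (derivative^[l] ((X - C a) ^ l * q)) = (l ! : K) * eval a q := by
  intro l
  induction l with
  | zero => intro q; simp
  | succ l ih =>
    intro q
    rw [Function.iterate_succ_apply, deriv_step, ih]
    simp [Nat.factorial_succ]
    ring

lemma eval_iter_sum {K : Type*} [Field K] (a : K) (P : K[X]) (n μ r : ℕ)
    (hn : P.natDegree < n) :
    eval a (derivative^[r] (X ^ (μ + r) * P))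
      = ∑ i ∈ range n, P.coeff i * ((i + μ + r).descFactorial r : K) * a ^ (i + μ) := by
  conv_lhs => rw [P.as_sum_range' n hn]
  rw [Finset.mul_sum, Polynomial.iterate_derivative_sum]
  rw [eval_finset_sum]
  refine Finset.sum_congr rfl fun i _ => ?_
  have : (X:K[X]) ^ (μ + r) * (monomial i (P.coeff i)) = C (P.coeff i) * X ^ (i + μ + r) := by
    rw [← C_mul_X_pow_eq_monomial]; ring_nf
  rw [this, Polynomial.iterate_derivative_C_mul, Polynomial.iterate_derivative_X_pow_eq_smul]
  have h2 : i + μ + r - r = i + μ := by omega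
  rw [h2, smul_eq_C_mul]
  rw [eval_mul, eval_mul, eval_C, eval_C, eval_pow, eval_X]
  ring

lemma coeff_sum_CX {K : Type*} [Field K] (c : ℕ → K) (T d : ℕ) :
    (∑ n ∈ range T, C (c n) * X ^ n).coeff d = if d < T then c d else 0 := by
  rw [finset_sum_coeff]
  simp only [coeff_C_mul, coeff_X_pow]
  by_cases h : d < T
  · rw [Finset.sum_eq_single d (fun i _ hi => by simp [Ne.symm hi]) (fun hd => by
      simp at hd; omega)]
    simp [h]
  · rw [if_neg h, Finset.sum_eq_zero (fun i hi => ?_)]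
    simp only [mem_range] at hi
    rw [if_neg (by omega), mul_zero]

lemma coeff_B0' {K : Type*} [Field K] (σ : ℕ → K) (ml μ d : ℕ) :
    (∑ i ∈ range (ml + 1), C (σ i * (((ml + μ)! : K) / ((i + μ)! : K))) * X ^ (ml - i)).coeff d
      = if d ≤ ml then σ (ml - d) * (((ml + μ)! : K) / ((ml - d + μ)! : K)) else 0 := by
  rw [finset_sum_coeff]
  simp only [coeff_C_mul, coeff_X_pow]
  by_cases h : d ≤ ml
  · rw [if_pos h, Finset.sum_eq_single (ml - d) (fun i hi hne => ?_) (fun hd => by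
      simp at hd)]
    · rw [if_pos (by omega), mul_one]
    · simp only [mem_range] at hi
      rw [if_neg (by omega), mul_zero]
  · rw [if_neg h, Finset.sum_eq_zero (fun i hi => ?_)]
    simp only [mem_range] at hi
    rw [if_neg (by omega), mul_zero]

lemma coeff_B0_mul_F {K : Type*} [Field K] (σ : ℕ → K) (a : K) (ml μ D N : ℕ) (hN : N ≤ D) :
    ((∑ i ∈ range (ml+1), C (σ i * (((ml+μ)! : K)/((i+μ)! : K))) * X^(ml-i)) *
     (∑ n ∈ range (D+1), C ((n ! : K) * a^n) * X^n)).coeff N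
    = ∑ x ∈ range (N+1), (if x ≤ ml then
        σ (ml-x) * (((ml+μ)! : K)/((ml-x+μ)! : K)) * (((N-x)! : K) * a^(N-x)) else 0) := by
  rw [coeff_mul, Finset.Nat.sum_antidiagonal_eq_sum_range_succ_mk]
  refine Finset.sum_congr rfl fun x hx => ?_
  simp only [mem_range] at hx
  rw [coeff_B0', coeff_sum_CX, if_pos (by omega : N - x < D + 1)]
  by_cases h : x ≤ ml
  · rw [if_pos h, if_pos h]
  · rw [if_neg h, if_neg h, zero_mul]

lemma coeff_S_low {K : Type*} [Field K] [CharZero K] (σ : ℕ → K) (a : K) (ml μ D : ℕ)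
    (N : ℕ) (hN : N < ml + μ) (hND : N ≤ D) :
    ((∑ i ∈ range (ml+1), C (σ i * (((ml+μ)! : K)/((i+μ)! : K))) * X^(ml-i)) *
     (∑ n ∈ range (D+1), C ((n ! : K) * a^n) * X^n)
     - C (((ml + μ)! : ℕ) : K) *
        ∑ N' ∈ range (ml + μ),
          C (∑ h ∈ range (min ml N' + 1),
              σ (ml - h) * (((N' - h)! : K) / ((ml - h + μ)! : K)) * a ^ (N' - h)) * X ^ N'
    ).coeff N = 0 := by
  rw [coeff_sub, coeff_B0_mul_F σ a ml μ D N hND, coeff_C_mul, coeff_sum_CX, if_pos hN]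
  rw [sub_eq_zero, Finset.mul_sum]
  rw [← Finset.sum_subset (Finset.range_subset_range.mpr (by omega : min ml N + 1 ≤ N + 1))
      (fun x hx hx' => by
        simp only [mem_range] at hx hx'
        rw [if_neg (by omega)])]
  refine Finset.sum_congr rfl fun x hx => ?_
  simp only [mem_range] at hx
  rw [if_pos (by omega : x ≤ ml)]
  have h1 : ((ml - x + μ)! : K) ≠ 0 := Nat.cast_ne_zero.mpr (Nat.factorial_ne_zero _)
  field_simp

lemma coeff_S_high {K : Type*} [Field K] [CharZero K] (σ : ℕ → K) (a : K) (P : K[X])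
    (ml μ D : ℕ) (hσ : ∀ i, σ i = P.coeff i) (hPdeg : P.natDegree ≤ ml)
    (N : ℕ) (hN : ml + μ ≤ N) (hND : N ≤ D) :
    ((∑ i ∈ range (ml+1), C (σ i * (((ml+μ)! : K)/((i+μ)! : K))) * X^(ml-i)) *
     (∑ n ∈ range (D+1), C ((n ! : K) * a^n) * X^n)
     - C (((ml + μ)! : ℕ) : K) *
        ∑ N' ∈ range (ml + μ),
          C (∑ h ∈ range (min ml N' + 1),
              σ (ml - h) * (((N' - h)! : K) / ((ml - h + μ)! : K)) * a ^ (N' - h)) * X ^ N'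
    ).coeff N
    = ((ml + μ)! : K) * a ^ (N - ml - μ) *
        eval a (derivative^[N - ml - μ] (X ^ (μ + (N - ml - μ)) * P)) := by
  rw [coeff_sub, coeff_B0_mul_F σ a ml μ D N hND, coeff_C_mul, coeff_sum_CX,
    if_neg (by omega : ¬ N < ml + μ), mul_zero, sub_zero]
  rw [eval_iter_sum a P (ml + 1) μ (N - ml - μ) (by omega)]
  rw [← Finset.sum_subset (Finset.range_subset_range.mpr (by omega : ml + 1 ≤ N + 1))
      (fun x hx hx' => by
        simp only [mem_range] at hx hx'
        rw [if_neg (by omega)])]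
  rw [← Finset.sum_range_reflect (fun x => if x ≤ ml then
        σ (ml-x) * (((ml+μ)! : K)/((ml-x+μ)! : K)) * (((N-x)! : K) * a^(N-x)) else 0) (ml+1)]
  rw [Finset.mul_sum]
  refine Finset.sum_congr rfl fun i hi => ?_
  simp only [mem_range] at hi
  rw [if_pos (by omega : ml + 1 - 1 - i ≤ ml)]
  have e1 : ml - (ml + 1 - 1 - i) = i := by omega
  have e2 : N - (ml + 1 - 1 - i) = i + μ + (N - ml - μ) := by omega
  rw [e1, e2, ← hσ i]
  set r := N - ml - μ with hr
  have hdesc : ((i + μ)! : K) * ((i + μ + r).descFactorial r : K) = ((i + μ + r)! : K) := by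
    rw [← Nat.cast_mul]
    norm_cast
    have := Nat.factorial_mul_descFactorial (by omega : r ≤ i + μ + r)
    rw [show i + μ + r - r = i + μ by omega] at this
    exact this
  have h1 : ((i + μ)! : K) ≠ 0 := Nat.cast_ne_zero.mpr (Nat.factorial_ne_zero _)
  field_simp
  rw [← hdesc]
  ring


lemma eval_iter_root_lt {K : Type*} [Field K] {m : ℕ} (α : Fin m → K) (l : ℕ) (j : Fin m)
    (μ r : ℕ) (hr : r < l) :
    eval (α j) (derivative^[r] (X ^ (μ + r) * ∏ k, (C (α k) - X) ^ l)) = 0 := by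
  rw [← Finset.mul_prod_erase univ _ (mem_univ j)]
  have key : (X:K[X]) ^ (μ + r) * ((C (α j) - X) ^ l * ∏ k ∈ univ.erase j, (C (α k) - X) ^ l)
      = C ((-1)^l) * ((X - C (α j)) ^ l * (X ^ (μ + r) * ∏ k ∈ univ.erase j, (C (α k) - X) ^ l)) := by
    have : (C (α j) - X : K[X]) = -(X - C (α j)) := by ring
    rw [this, neg_pow]
    simp [C_neg, C_1]
    ring
  rw [key, Polynomial.iterate_derivative_C_mul, eval_mul, eval_iter_lt _ _ _ _ hr, mul_zero]

lemma eval_iter_root_eq {K : Type*} [Field K] {m : ℕ} (α : Fin m → K) (l : ℕ) (j : Fin m)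
    (μ : ℕ) :
    eval (α j) (derivative^[l] (X ^ (μ + l) * ∏ k, (C (α k) - X) ^ l))
      = (-1)^l * (l ! : K) * (α j)^(μ + l)
          * eval (α j) (∏ k ∈ univ.erase j, (C (α k) - X) ^ l) := by
  rw [← Finset.mul_prod_erase univ _ (mem_univ j)]
  have key : (X:K[X]) ^ (μ + l) * ((C (α j) - X) ^ l * ∏ k ∈ univ.erase j, (C (α k) - X) ^ l)
      = C ((-1)^l) * ((X - C (α j)) ^ l * (X ^ (μ + l) * ∏ k ∈ univ.erase j, (C (α k) - X) ^ l)) := by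
    have : (C (α j) - X : K[X]) = -(X - C (α j)) := by ring
    rw [this, neg_pow]
    simp [C_neg, C_1]
    ring
  rw [key, Polynomial.iterate_derivative_C_mul, eval_mul, eval_iter_eq, eval_C, eval_mul,
    eval_pow, eval_X]
  ring

lemma det_coltrans {K : Type*} [Field K] {m : ℕ} (B0 : ℕ → K[X]) (Bj : ℕ → Fin m → K[X])
    (F : Fin m → K[X])
    (M : Matrix (Fin (m + 1)) (Fin (m + 1)) K[X])
    (hM : M = Matrix.of fun μ : Fin (m + 1) =>
        Fin.cons (B0 (μ : ℕ)) (fun j : Fin m => Bj (μ : ℕ) j)) :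
    (Matrix.of fun μ : Fin (m + 1) =>
        Fin.cons (B0 (μ : ℕ)) (fun j : Fin m => B0 (μ:ℕ) * F j - Bj (μ : ℕ) j)).det
      = M.det * (-1)^m := by
  set E : Matrix (Fin (m+1)) (Fin (m+1)) K[X] :=
    Matrix.of (Fin.cons (Fin.cons 1 (fun j : Fin m => F j))
      (fun i : Fin m => fun k => if k = Fin.succ i then (-1:K[X]) else 0)) with hE
  have hME : (Matrix.of fun μ : Fin (m + 1) =>
      Fin.cons (B0 (μ : ℕ)) (fun j : Fin m => B0 (μ:ℕ) * F j - Bj (μ : ℕ) j)) = M * E := by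
    ext μ k
    rw [Matrix.mul_apply, Fin.sum_univ_succ]
    induction k using Fin.cases with
    | zero =>
      simp [hE, hM, Fin.succ_ne_zero, (Fin.succ_ne_zero _).symm]
    | succ c =>
      simp only [hE, hM, Matrix.of_apply, Fin.cons_succ, Fin.cons_zero, Fin.succ_inj,
        mul_ite, mul_neg, mul_one, mul_zero]
      rw [Finset.sum_ite_eq univ c (fun j => -(Bj (μ:ℕ) j))]
      simp [sub_eq_add_neg]
  have hEtri : E.BlockTriangular id := by
    intro i k hik
    simp only [id] at hik
    induction i using Fin.cases with
    | zero => exact absurd hik (Fin.not_lt_zero k)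
    | succ i' =>
      simp only [hE, Matrix.of_apply, Fin.cons_succ]
      rw [if_neg (by exact fun h => by subst h; exact absurd hik (lt_irrefl _))]
  have hdetE : E.det = (-1)^m := by
    rw [Matrix.det_of_upperTriangular hEtri]
    rw [Fin.prod_univ_succ]
    simp [hE]
  rw [hME, Matrix.det_mul, hdetE]

lemma det_uvv {K : Type*} [Field K] {m : ℕ} (u : Fin m → K) (v : Fin m → K) (α : Fin m → K) :
    (Matrix.of fun r c : Fin m => u r * (v c * (α c ^ (r:ℕ)))).det
      = (∏ r, u r) * ((∏ c, v c) * ∏ i : Fin m, ∏ j ∈ Ioi i, (α j - α i)) := by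
  rw [Matrix.det_mul_column u (fun r c : Fin m => v c * (α c ^ (r:ℕ)))]
  congr 1
  have h1 : (Matrix.of fun r c : Fin m => v c * (α c ^ (r:ℕ)))
      = Matrix.of fun r c : Fin m => v c * (Matrix.vandermonde α).transpose r c := by
    ext r c; simp [Matrix.vandermonde]
  have h2 : (Matrix.det fun r c : Fin m => v c * (α c ^ (r:ℕ)))
      = (Matrix.of fun r c : Fin m => v c * (α c ^ (r:ℕ))).det := rfl
  rw [h2, h1, Matrix.det_mul_row v, Matrix.det_transpose, Matrix.det_vandermonde]

lemma det_rowscale {K : Type*} [Field K] {m : ℕ} (e : Fin (m+1) → ℕ)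
    (A : Fin (m+1) → Fin m → K[X])
    (Sred : Fin (m+1) → Fin m → K[X]) (i : Fin (m+1))
    (h : ∀ μ j, A μ j = X ^ (e μ) * Sred μ j) :
    (Matrix.of fun r c : Fin m => A (i.succAbove r) c).det
      = X ^ (∑ r : Fin m, e (i.succAbove r)) *
        (Matrix.of fun r c : Fin m => Sred (i.succAbove r) c).det := by
  have h1 : (Matrix.of fun r c : Fin m => A (i.succAbove r) c)
      = Matrix.of fun r c : Fin m => X ^ (e (i.succAbove r)) * Sred (i.succAbove r) c := by
    ext r c; rw [Matrix.of_apply, Matrix.of_apply, h]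
  rw [h1, Matrix.det_mul_column (fun r => X ^ (e (i.succAbove r))) (fun r c => Sred (i.succAbove r) c), Finset.prod_pow_eq_pow_sum]
  rfl

lemma gauss_fin (m : ℕ) : 2 * (∑ k : Fin (m+1), (k:ℕ)) = (m+1) * m := by
  rw [Fin.sum_univ_eq_sum_range (fun k => k) (m+1)]
  have h := Finset.sum_range_id_mul_two (m+1)
  rw [Nat.add_sub_cancel] at h
  omega

lemma mulPredAux (m : ℕ) : (m+1) * m = m * (m-1) + 2 * m := by
  cases m with
  | zero => rfl
  | succ n => simp only [Nat.add_sub_cancel]; ring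

lemma even_half (m : ℕ) : 2 * (m * (m-1) / 2) = m * (m-1) := by
  have hev : Even (m * (m-1)) := by
    cases m with
    | zero => simp
    | succ n => rw [Nat.add_sub_cancel, Nat.mul_comm]; exact Nat.even_mul_succ_self n
  exact Nat.mul_div_cancel' hev.two_dvd

lemma arith1 (m l : ℕ) (hm : 1 ≤ m) (hl : 1 ≤ l) :
    (m+1)*l + m ≤ m*(m+1)*l + m*(m-1)/2 + 1 := by
  have hA : 1 ≤ (m+1)*l := Nat.mul_pos (by omega) hl
  have e : m*((m+1)*l) = (m-1)*((m+1)*l) + (m+1)*l := by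
    generalize (m+1)*l = a
    conv_lhs => rw [show m = (m-1)+1 by omega]
    ring
  have hB : m - 1 ≤ (m-1)*((m+1)*l) := Nat.le_mul_of_pos_right _ (by omega)
  have e2 : m*(m+1)*l = m*((m+1)*l) := by ring
  have := even_half m
  omega

lemma arith_sum (m l : ℕ) (i : Fin (m+1)) :
    (i:ℕ) + ∑ r : Fin m, ((m+1)*l + ((i.succAbove r : Fin (m+1)) : ℕ))
      = m*(m+1)*l + m*(m-1)/2 + m := by
  rw [Finset.sum_add_distrib, Finset.sum_const, Finset.card_univ, Fintype.card_fin,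
    smul_eq_mul]
  have h1 : (i:ℕ) + ∑ r : Fin m, ((i.succAbove r : Fin (m+1)) : ℕ)
      = ∑ k : Fin (m+1), (k:ℕ) := (Fin.sum_univ_succAbove (fun k : Fin (m+1) => (k:ℕ)) i).symm
  have h2 := gauss_fin m
  have h3 := mulPredAux m
  have h4 := even_half m
  have e2 : m*(m+1)*l = m*((m+1)*l) := by ring
  omega


lemma detdeg {K : Type*} [Field K] {m : ℕ} (l : ℕ) (hm : 1 ≤ m) (hl : 1 ≤ l)
    (B0 : ℕ → K[X]) (Bj : ℕ → Fin m → K[X])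
    (M : Matrix (Fin (m + 1)) (Fin (m + 1)) K[X])
    (hM : M = Matrix.of fun μ : Fin (m + 1) =>
        Fin.cons (B0 (μ : ℕ)) (fun j : Fin m => Bj (μ : ℕ) j))
    (hdB0 : ∀ μ : ℕ, (B0 μ).natDegree ≤ m*l)
    (hdBj : ∀ (μ : ℕ) (j : Fin m), (Bj μ j).natDegree ≤ m*l - 1 + μ) :
    M.det.natDegree ≤ m*(m+1)*l + m*(m-1)/2 := by
  have hml : 1 ≤ m * l := Nat.mul_pos hm hl
  rw [Matrix.det_apply]
  refine Polynomial.natDegree_sum_le_of_forall_le _ _ (fun π _ => ?_)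
  have h1 : ((Equiv.Perm.sign π) • ∏ i, M (π i) i).natDegree
      = (∏ i, M (π i) i).natDegree := by
    rcases Int.units_eq_one_or (Equiv.Perm.sign π) with h|h <;> rw [h] <;> simp
  rw [h1]
  refine le_trans (Polynomial.natDegree_prod_le _ _) ?_
  rw [Fin.sum_univ_succ]
  have hb0 : (M (π 0) 0).natDegree ≤ m*l := by
    rw [hM]; simpa using hdB0 _
  have hbj : ∀ j : Fin m, (M (π j.succ) j.succ).natDegree ≤ m*l - 1 + ((π j.succ : Fin (m+1)) : ℕ) := by
    intro j; rw [hM]; simpa using hdBj _ j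
  refine le_trans (Nat.add_le_add hb0 (Finset.sum_le_sum fun j _ => hbj j)) ?_
  rw [Finset.sum_add_distrib, Finset.sum_const, Finset.card_univ, Fintype.card_fin, smul_eq_mul]
  have hsum : ((π 0 : Fin (m+1)) : ℕ) + ∑ j : Fin m, ((π j.succ : Fin (m+1)) : ℕ)
      = ∑ k : Fin (m+1), (k:ℕ) := by
    rw [← Fin.sum_univ_succ (fun i : Fin (m+1) => ((π i : Fin (m+1)) : ℕ))]
    exact Equiv.sum_comp π (fun k : Fin (m+1) => (k:ℕ))
  have h2 := gauss_fin m
  have h3 := mulPredAux m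
  have h4 := even_half m
  have e1 : m*(m*l-1) + m = m*(m*l) := by
    obtain ⟨b, hb⟩ : ∃ b, m*l = b+1 := ⟨m*l-1, by omega⟩
    rw [hb]; simp; ring
  have e2 : m*(m+1)*l = m*(m*l) + m*l := by ring
  have h5 : ((π 0 : Fin (m+1)) : ℕ) ≤ m := Fin.is_le _
  omega


theorem pade_determinant_ne_zero {K : Type*} [Field K] [CharZero K]
    {m : ℕ} (hm : 1 ≤ m) (α : Fin m → K) (hα0 : ∀ i, α i ≠ 0)
    (hinj : Function.Injective α)
    (l : ℕ) (hl : 1 ≤ l)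
    (σ : ℕ → K)
    (hσ : ∀ i, σ i = (∏ j, (C (α j) - X) ^ l).coeff i)
    (B0 : ℕ → K[X])
    (hB0 : ∀ μ, B0 μ = ∑ i ∈ range (m * l + 1),
        C (σ i * (((m * l + μ)! : K) / ((i + μ)! : K))) * X ^ (m * l - i))
    (Bj : ℕ → Fin m → K[X])
    (hBj : ∀ μ j, Bj μ j = C (((m * l + μ)! : ℕ) : K) *
        ∑ N ∈ range (m * l + μ),
          C (∑ h ∈ range (min (m * l) N + 1),
              σ (m * l - h) * (((N - h)! : K) / ((m * l - h + μ)! : K)) *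
                (α j) ^ (N - h)) * X ^ N)
    (M : Matrix (Fin (m + 1)) (Fin (m + 1)) K[X])
    (hM : M = Matrix.of fun μ : Fin (m + 1) =>
        Fin.cons (B0 (μ : ℕ)) (fun j : Fin m => Bj (μ : ℕ) j)) :
    M.det ≠ 0 ∧
      ∃ b : K, b ≠ 0 ∧
        M.det = C b * X ^ (m * (m + 1) * l + m * (m - 1) / 2) := by
  classical
  have hml : 1 ≤ m * l := Nat.mul_pos hm hl
  set D : ℕ := m * (m + 1) * l + m * (m - 1) / 2 with hD
  set P : K[X] := ∏ j, (C (α j) - X) ^ l with hP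
  -- facts about P
  have hfac_ne : ∀ j : Fin m, ((C (α j) - X : K[X])) ^ l ≠ 0 := by
    intro j
    apply pow_ne_zero
    intro h
    have h1 := congrArg (fun p : K[X] => p.coeff 1) h
    simp [coeff_C] at h1
  have hPne : P ≠ 0 := Finset.prod_ne_zero_iff.mpr (fun j _ => hfac_ne j)
  have hPdeg : P.natDegree = m * l := by
    rw [hP, Polynomial.natDegree_prod _ _ (fun j _ => hfac_ne j)]
    have hd1 : ∀ j : Fin m, (((C (α j) - X : K[X])) ^ l).natDegree = l := by
      intro j
      rw [natDegree_pow, show (C (α j) - X : K[X]) = -(X - C (α j)) by ring,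
        natDegree_neg, natDegree_X_sub_C, mul_one]
    rw [Finset.sum_congr rfl (fun j _ => hd1 j), Finset.sum_const, Finset.card_univ,
      Fintype.card_fin, smul_eq_mul]
  have hσP : ∀ i, σ i = P.coeff i := hσ
  have hσtop : σ (m * l) ≠ 0 := by
    rw [hσP, ← hPdeg]
    exact Polynomial.leadingCoeff_ne_zero.mpr hPne
  -- W
  obtain ⟨W, hW⟩ : ∃ W : Fin m → K,
      ∀ j, W j = eval (α j) (∏ k ∈ univ.erase j, (C (α k) - X) ^ l) := ⟨_, fun j => rfl⟩
  have hWne : ∀ j, W j ≠ 0 := by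
    intro j
    rw [hW, Polynomial.eval_prod]
    apply Finset.prod_ne_zero_iff.mpr
    intro k hk
    rw [eval_pow]
    apply pow_ne_zero
    simp only [eval_sub, eval_C, eval_X]
    exact sub_ne_zero.mpr (fun h => (Finset.mem_erase.mp hk).1 (hinj h))
  -- F
  obtain ⟨F, hF⟩ : ∃ F : Fin m → K[X],
      ∀ j, F j = ∑ n ∈ range (D+1), C ((n ! : K) * (α j)^n) * X^n := ⟨_, fun j => rfl⟩
  -- coefficients of S := B0*F - Bj
  have hcl : ∀ (μ : ℕ) (j : Fin m) (N : ℕ), N < m*l + μ → N ≤ D →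
      (B0 μ * F j - Bj μ j).coeff N = 0 := by
    intro μ j N h1 h2
    rw [hB0, hBj, hF]
    exact coeff_S_low σ (α j) (m*l) μ D N h1 h2
  have hch : ∀ (μ : ℕ) (j : Fin m) (N : ℕ), m*l + μ ≤ N → N ≤ D →
      (B0 μ * F j - Bj μ j).coeff N
        = ((m*l + μ)! : K) * (α j) ^ (N - m*l - μ) *
            eval (α j) (derivative^[N - m*l - μ] (X ^ (μ + (N - m*l - μ)) * P)) := by
    intro μ j N h1 h2
    rw [hB0, hBj, hF]
    exact coeff_S_high σ (α j) P (m*l) μ D hσP (le_of_eq hPdeg) N h1 h2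
  -- divisibility by X^((m+1)l+μ)
  have harith1 := arith1 m l hm hl
  have hdvd : ∀ (μ : ℕ), μ ≤ m → ∀ j, X ^ ((m+1)*l + μ) ∣ (B0 μ * F j - Bj μ j) := by
    intro μ hμ j
    rw [Polynomial.X_pow_dvd_iff]
    intro d hd
    have hll : (m+1)*l = m*l + l := by ring
    have hdD : d ≤ D := by omega
    by_cases h : d < m*l + μ
    · exact hcl μ j d h hdD
    · push_neg at h
      rw [hch μ j d h hdD, hP, eval_iter_root_lt α l j μ (d - m*l - μ) (by omega), mul_zero]
  -- exact coefficient
  have hex : ∀ (μ : ℕ), μ < m → ∀ j, (B0 μ * F j - Bj μ j).coeff ((m+1)*l + μ)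
      = (((m*l + μ)! : K) * ((-1:K)^l * (l ! : K))) * (((α j) ^ (2*l) * W j) * (α j)^μ) := by
    intro μ hμ j
    have hll : (m+1)*l = m*l + l := by ring
    have hND : (m+1)*l + μ ≤ D := by omega
    rw [hch μ j _ (by omega) hND]
    have hr : (m+1)*l + μ - m*l - μ = l := by omega
    rw [hr, hP, eval_iter_root_eq α l j μ, ← hW]
    rw [pow_add (α j) μ l, two_mul l, pow_add (α j) l l]
    ring
  -- M' and the determinant relation
  obtain ⟨M', hM'⟩ : ∃ M' : Matrix (Fin (m+1)) (Fin (m+1)) K[X],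
      M' = Matrix.of fun μ : Fin (m + 1) =>
        Fin.cons (B0 (μ : ℕ)) (fun j : Fin m => B0 (μ:ℕ) * F j - Bj (μ : ℕ) j) := ⟨_, rfl⟩
  have hrel : M'.det = M.det * (-1)^m := by
    rw [hM']; exact det_coltrans B0 Bj F M hM
  -- Sred
  have hSex : ∀ (μ : Fin (m+1)) (j : Fin m), ∃ q,
      B0 (μ:ℕ) * F j - Bj (μ:ℕ) j = X ^ ((m+1)*l + (μ:ℕ)) * q := by
    intro μ j
    exact hdvd (μ:ℕ) (Fin.is_le μ) j
  choose Sred hSred using hSex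
  -- Laplace expansion
  have hlap : M'.det = ∑ i : Fin (m+1), (-1)^(i:ℕ) * B0 (i:ℕ) *
      (X ^ (∑ r : Fin m, ((m+1)*l + ((i.succAbove r : Fin (m+1)) : ℕ))) *
        (Matrix.of fun r c : Fin m => Sred (i.succAbove r) c).det) := by
    rw [Matrix.det_succ_column_zero]
    refine Finset.sum_congr rfl fun i _ => ?_
    have h0 : M' i 0 = B0 (i:ℕ) := by rw [hM']; rfl
    have hsub : M'.submatrix i.succAbove Fin.succ
        = Matrix.of fun r c : Fin m =>
            (fun (μ : Fin (m+1)) (c : Fin m) => B0 (μ:ℕ) * F c - Bj (μ:ℕ) c) (i.succAbove r) c := by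
      ext r c
      rw [Matrix.submatrix_apply, hM']
      rfl
    rw [h0, hsub, det_rowscale (fun μ : Fin (m+1) => (m+1)*l + (μ:ℕ)) _ Sred i
      (fun μ j => hSred μ j)]
  -- X^D divides M'.det
  have harsum : ∀ i : Fin (m+1),
      (i:ℕ) + ∑ r : Fin m, ((m+1)*l + ((i.succAbove r : Fin (m+1)) : ℕ)) = D + m := by
    intro i
    exact arith_sum m l i
  have hXD : X ^ D ∣ M'.det := by
    rw [hlap]
    refine Finset.dvd_sum (fun i _ => ?_)
    have h1 : D ≤ ∑ r : Fin m, ((m+1)*l + ((i.succAbove r : Fin (m+1)) : ℕ)) := by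
      have := harsum i
      have h2 : (i:ℕ) ≤ m := Fin.is_le i
      omega
    exact ((pow_dvd_pow X h1).mul_right _).mul_left _
  -- coefficient at D
  have hc0 : M'.det.coeff D = (-1:K)^m * (σ (m*l) *
      ((∏ r : Fin m, (((m*l + (r:ℕ))! : K) * ((-1:K)^l * (l ! : K)))) *
        ((∏ c : Fin m, ((α c)^(2*l) * W c)) * ∏ i : Fin m, ∏ j ∈ Ioi i, (α j - α i)))) := by
    rw [hlap, finset_sum_coeff]
    rw [Finset.sum_eq_single (Fin.last m) ?side1 ?side2]
    case side1 =>
      intro i _ hne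
      have hlt : D + 1 ≤ ∑ r : Fin m, ((m+1)*l + ((i.succAbove r : Fin (m+1)) : ℕ)) := by
        have := harsum i
        have h2 : (i:ℕ) < m := by
          have := Fin.lt_last_iff_ne_last.mpr hne
          simpa [Fin.lt_iff_val_lt_val] using this
        omega
      have hdvd' : X ^ (D+1) ∣ (-1:K[X])^(i:ℕ) * B0 (i:ℕ) *
          (X ^ (∑ r : Fin m, ((m+1)*l + ((i.succAbove r : Fin (m+1)) : ℕ))) *
            (Matrix.of fun r c : Fin m => Sred (i.succAbove r) c).det) :=
        ((pow_dvd_pow X hlt).mul_right _).mul_left _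
      exact Polynomial.X_pow_dvd_iff.mp hdvd' D (by omega)
    case side2 => exact fun h => absurd (Finset.mem_univ _) h
    -- main term
    have hEt : (∑ r : Fin m, ((m+1)*l + (((Fin.last m).succAbove r : Fin (m+1)) : ℕ))) = D := by
      have := harsum (Fin.last m)
      rw [Fin.val_last] at this
      omega
    rw [hEt, Fin.val_last]
    have hre : ((-1:K[X]))^m * B0 m *
        (X ^ D * (Matrix.of fun r c : Fin m => Sred ((Fin.last m).succAbove r) c).det)
        = X ^ D * ((-1:K[X])^m * B0 m *
            (Matrix.of fun r c : Fin m => Sred ((Fin.last m).succAbove r) c).det) := by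
      ring
    have hcm := Polynomial.coeff_X_pow_mul ((-1:K[X])^m * B0 m *
      (Matrix.of fun r c : Fin m => Sred ((Fin.last m).succAbove r) c).det) D 0
    rw [zero_add] at hcm
    rw [hre, hcm, Polynomial.mul_coeff_zero, Polynomial.mul_coeff_zero]
    have hc1 : ((-1:K[X])^m).coeff 0 = (-1:K)^m := by
      rw [show ((-1:K[X])^m) = C ((-1:K)^m) by rw [map_pow, map_neg, map_one]]
      rw [coeff_C_zero]
    have hc2 : (B0 m).coeff 0 = σ (m*l) := by
      rw [hB0 m, coeff_B0', if_pos (Nat.zero_le _)]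
      rw [Nat.sub_zero, div_self (Nat.cast_ne_zero.mpr (Nat.factorial_ne_zero _) : ((m*l+m)! : K) ≠ 0), mul_one]
    have hc3 : ((Matrix.of fun r c : Fin m => Sred ((Fin.last m).succAbove r) c).det).coeff 0
        = (∏ r : Fin m, (((m*l + (r:ℕ))! : K) * ((-1:K)^l * (l ! : K)))) *
            ((∏ c : Fin m, ((α c)^(2*l) * W c)) * ∏ i : Fin m, ∏ j ∈ Ioi i, (α j - α i)) := by
      rw [Polynomial.coeff_zero_eq_eval_zero]
      have hmap : eval 0 ((Matrix.of fun r c : Fin m => Sred ((Fin.last m).succAbove r) c).det)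
          = (Matrix.of fun r c : Fin m => eval 0 (Sred ((Fin.last m).succAbove r) c)).det := by
        have h := RingHom.map_det (Polynomial.evalRingHom (0:K))
          (Matrix.of fun r c : Fin m => Sred ((Fin.last m).succAbove r) c)
        simpa [Matrix.map] using h
      rw [hmap]
      have hent : (Matrix.of fun r c : Fin m => eval 0 (Sred ((Fin.last m).succAbove r) c))
          = Matrix.of fun r c : Fin m =>
              (((m*l + (r:ℕ))! : K) * ((-1:K)^l * (l ! : K))) *
                ((((α c) ^ (2*l) * W c)) * (α c)^((r:ℕ))) := by
        ext r c
        rw [Matrix.of_apply, Matrix.of_apply, Fin.succAbove_last]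
        have h0 : eval 0 (Sred (Fin.castSucc r) c) = (Sred (Fin.castSucc r) c).coeff 0 :=
          (Polynomial.coeff_zero_eq_eval_zero _).symm
        have h1 := Polynomial.coeff_X_pow_mul (Sred (Fin.castSucc r) c)
          ((m+1)*l + ((Fin.castSucc r : Fin (m+1)) : ℕ)) 0
        rw [zero_add] at h1
        rw [h0, ← h1, ← hSred, Fin.coe_castSucc, hex (r:ℕ) r.isLt c]
      rw [hent, det_uvv]
    rw [hc1, hc2, hc3]
    ring
  -- nonvanishing of the coefficient
  have hc0ne : M'.det.coeff D ≠ 0 := by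
    rw [hc0]
    apply mul_ne_zero (pow_ne_zero _ (neg_ne_zero.mpr one_ne_zero))
    apply mul_ne_zero hσtop
    apply mul_ne_zero
    · refine Finset.prod_ne_zero_iff.mpr (fun r _ => ?_)
      exact mul_ne_zero (Nat.cast_ne_zero.mpr (Nat.factorial_ne_zero _))
        (mul_ne_zero (pow_ne_zero _ (neg_ne_zero.mpr one_ne_zero))
          (Nat.cast_ne_zero.mpr (Nat.factorial_ne_zero _)))
    apply mul_ne_zero
    · refine Finset.prod_ne_zero_iff.mpr (fun c _ => ?_)
      exact mul_ne_zero (pow_ne_zero _ (hα0 c)) (hWne c)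
    · refine Finset.prod_ne_zero_iff.mpr (fun i _ => ?_)
      refine Finset.prod_ne_zero_iff.mpr (fun j hj => ?_)
      refine sub_ne_zero.mpr (fun h => ?_)
      have : j = i := hinj h
      subst this
      exact absurd (Finset.mem_Ioi.mp hj) (lt_irrefl _)
  -- degree bound
  have hdB0 : ∀ μ : ℕ, (B0 μ).natDegree ≤ m*l := by
    intro μ
    rw [hB0]
    refine Polynomial.natDegree_sum_le_of_forall_le _ _ (fun i _ => ?_)
    exact le_trans (Polynomial.natDegree_C_mul_X_pow_le _ _) (Nat.sub_le _ _)
  have hdBj : ∀ (μ : ℕ) (j : Fin m), (Bj μ j).natDegree ≤ m*l - 1 + μ := by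
    intro μ j
    rw [hBj]
    refine le_trans (Polynomial.natDegree_C_mul_le _ _) ?_
    refine Polynomial.natDegree_sum_le_of_forall_le _ _ (fun N hN => ?_)
    simp only [mem_range] at hN
    exact le_trans (Polynomial.natDegree_C_mul_X_pow_le _ _) (by omega)
  have hdegM : M.det.natDegree ≤ D := detdeg l hm hl B0 Bj M hM hdB0 hdBj
  -- conclude
  obtain ⟨R, hR⟩ := hXD
  have hRc : R.coeff 0 = M'.det.coeff D := by
    have hcm := Polynomial.coeff_X_pow_mul R D 0
    rw [zero_add] at hcm
    rw [hR, hcm]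
  have hRne : R ≠ 0 := by
    intro h
    rw [h, Polynomial.coeff_zero] at hRc
    exact hc0ne hRc.symm
  have hdegM' : M'.det.natDegree ≤ D := by
    rw [hrel]
    refine le_trans (Polynomial.natDegree_mul_le) ?_
    have : ((-1:K[X])^m).natDegree = 0 := by
      rw [show ((-1:K[X])^m) = C ((-1:K)^m) by rw [map_pow, map_neg, map_one]]
      exact natDegree_C _
    omega
  have hRdeg : R.natDegree = 0 := by
    have h1 : M'.det.natDegree = D + R.natDegree := by
      rw [hR, Polynomial.natDegree_mul (pow_ne_zero _ Polynomial.X_ne_zero) hRne,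
        Polynomial.natDegree_X_pow]
    omega
  obtain ⟨b0, hb0⟩ := Polynomial.natDegree_eq_zero.mp hRdeg
  have hb0c : b0 = M'.det.coeff D := by
    rw [← hRc, ← hb0, coeff_C_zero]
  have hMM : M.det = M'.det * (-1)^m := by
    rw [hrel, mul_assoc, ← mul_pow]
    norm_num
  refine ⟨?_, ⟨(-1:K)^m * b0, ?_, ?_⟩⟩
  · intro h
    rw [h] at hMM
    have h3 : M'.det = 0 := by
      have h2 : M'.det * ((-1:K[X])^m * (-1)^m) = 0 := by rw [← mul_assoc, ← hMM, zero_mul]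
      rwa [← mul_pow, neg_mul_neg, one_mul, one_pow, mul_one] at h2
    rw [h3, Polynomial.coeff_zero] at hc0ne
    exact hc0ne rfl
  · refine mul_ne_zero (pow_ne_zero _ (neg_ne_zero.mpr one_ne_zero)) ?_
    intro h0
    rw [h0] at hb0c
    exact hc0ne hb0c.symm
  · rw [hMM, hR, ← hb0]
    rw [show ((-1:K[X])^m) = C ((-1:K)^m) by rw [map_pow, map_neg, map_one]]
    rw [mul_assoc, ← C_mul, mul_comm b0 ((-1:K)^m), mul_comm (X^D) (C ((-1:K)^m * b0))]
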